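/- For every $T \geq \frac{1}{3}$, the function $m_T(\xi) = \sqrt{\frac{(1+T\xi^2)\tanh\xi}{\xi}}$ (extended by $m_T(0)=1$) is strictly increasing on $(0,\infty)$. -/

import Mathlib

open Real Set

/-- Generic: f 0 = 0 and f' > 0 on (0,∞) implies f > 0 on (0,∞). -/
lemma pos_of_deriv_pos (f f' : ℝ → ℝ) (hd : ∀ x, HasDerivAt f (f' x) x)
    (h0 : f 0 = 0) (hpos : ∀ x, 0 < x → 0 < f' x) : ∀ x, 0 < x → 0 < f x := by
  intro x hx
  have mono : StrictMonoOn f (Ici 0) := by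
    refine strictMonoOn_of_deriv_pos (convex_Ici 0)
      (fun y _ => (hd y).continuousAt.continuousWithinAt) ?_
    intro y hy
    rw [interior_Ici] at hy
    rw [(hd y).deriv]
    exact hpos y hy
  have := mono self_mem_Ici (le_of_lt hx) hx
  rwa [h0] at this

lemma key_ineq (x : ℝ) (hx : 0 < x) :
    0 < 12 * x + x ^ 3 - (12 - x ^ 2) * Real.sinh x := by
  have h3 : ∀ x, 0 < x → 0 < 6 + 6 * x * Real.sinh x + (x ^ 2 - 6) * Real.cosh x := by
    refine pos_of_deriv_pos _ (fun x => x ^ 2 * Real.sinh x + 8 * x * Real.cosh x) ?_ (by simp) ?_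
    · intro x
      have hs := Real.hasDerivAt_sinh x
      have hc := Real.hasDerivAt_cosh x
      have := ((hasDerivAt_const x (6:ℝ)).add
        (((hasDerivAt_id x).const_mul 6).mul hs)).add
        (((hasDerivAt_pow 2 x).sub_const 6).mul hc)
      refine this.congr_deriv ?_
      simp only [id_eq]
      ring
    · intro x hx
      have hs : 0 < Real.sinh x := Real.sinh_pos_iff.2 hx
      have hc : 0 < Real.cosh x := Real.cosh_pos x
      positivity
  have h2 : ∀ x, 0 < x → 0 < 6 * x + 4 * x * Real.cosh x + (x ^ 2 - 10) * Real.sinh x := by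
    refine pos_of_deriv_pos _
      (fun x => 6 + 6 * x * Real.sinh x + (x ^ 2 - 6) * Real.cosh x) ?_ (by simp) h3
    intro x
    have hs := Real.hasDerivAt_sinh x
    have hc := Real.hasDerivAt_cosh x
    have := ((((hasDerivAt_id x).const_mul 6)).add
      (((hasDerivAt_id x).const_mul 4).mul hc)).add
      (((hasDerivAt_pow 2 x).sub_const 10).mul hs)
    refine this.congr_deriv ?_
    simp only [id_eq]
    ring
  have h1 : ∀ x, 0 < x →
      0 < 12 + 3 * x ^ 2 + 2 * x * Real.sinh x - (12 - x ^ 2) * Real.cosh x := by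
    refine pos_of_deriv_pos _
      (fun x => 6 * x + 4 * x * Real.cosh x + (x ^ 2 - 10) * Real.sinh x) ?_ (by simp) h2
    intro x
    have hs := Real.hasDerivAt_sinh x
    have hc := Real.hasDerivAt_cosh x
    have := (((hasDerivAt_const x (12:ℝ)).add ((hasDerivAt_pow 2 x).const_mul 3)).add
      (((hasDerivAt_id x).const_mul 2).mul hs)).sub
      (((hasDerivAt_pow 2 x).const_sub 12).mul hc)
    refine this.congr_deriv ?_
    simp only [id_eq]
    ring
  refine pos_of_deriv_pos (fun x => 12 * x + x ^ 3 - (12 - x ^ 2) * Real.sinh x)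
    (fun x => 12 + 3 * x ^ 2 + 2 * x * Real.sinh x - (12 - x ^ 2) * Real.cosh x) ?_ (by simp) h1 x hx
  intro x
  have hs := Real.hasDerivAt_sinh x
  have hc := Real.hasDerivAt_cosh x
  have := ((((hasDerivAt_id x).const_mul 12)).add (hasDerivAt_pow 3 x)).sub
    (((hasDerivAt_pow 2 x).const_sub 12).mul hs)
  refine this.congr_deriv ?_
  ring

theorem stmt_3 (T : ℝ) (hT : 1 / 3 ≤ T) :
    StrictMonoOn (fun ξ : ℝ => Real.sqrt ((1 + T * ξ ^ 2) * Real.tanh ξ / ξ))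
      (Set.Ioi (0 : ℝ)) := by
  -- rewrite tanh
  have feq : ∀ ξ : ℝ, (1 + T * ξ ^ 2) * Real.tanh ξ / ξ
      = (1 + T * ξ ^ 2) * Real.sinh ξ / (Real.cosh ξ * ξ) := by
    intro ξ
    rw [Real.tanh_eq_sinh_div_cosh]
    rw [mul_div_assoc', div_div]
  set g : ℝ → ℝ := fun ξ => (1 + T * ξ ^ 2) * Real.sinh ξ / (Real.cosh ξ * ξ) with hg
  have hgmono : StrictMonoOn g (Ioi 0) := by
    refine strictMonoOn_of_deriv_pos (convex_Ioi 0) ?_ ?_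
    · apply ContinuousOn.div
      · fun_prop
      · fun_prop
      · intro x hx
        have : (0:ℝ) < x := hx
        positivity
    · intro x hx
      rw [interior_Ioi] at hx
      have hx0 : (0:ℝ) < x := hx
      have hs := Real.hasDerivAt_sinh x
      have hc := Real.hasDerivAt_cosh x
      have hN : HasDerivAt (fun ξ : ℝ => (1 + T * ξ ^ 2) * Real.sinh ξ)
          ((2 * T * x) * Real.sinh x + (1 + T * x ^ 2) * Real.cosh x) x := by
        have := (((hasDerivAt_pow 2 x).const_mul T).const_add 1).mul hs
        refine this.congr_deriv ?_
        ring
      have hD : HasDerivAt (fun ξ : ℝ => Real.cosh ξ * ξ)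
          (Real.sinh x * x + Real.cosh x) x := by
        exact (hc.mul (hasDerivAt_id x)).congr_deriv (by simp)
      have hDne : Real.cosh x * x ≠ 0 := by
        have := Real.cosh_pos x
        positivity
      have hgd : HasDerivAt g _ x := hN.div hD hDne
      rw [hgd.deriv]
      apply div_pos
      · have hkey := key_ineq (2 * x) (by linarith)
        have hsc : Real.sinh (2 * x) = 2 * Real.sinh x * Real.cosh x := by
          rw [two_mul, Real.sinh_add]; ring
        rw [hsc] at hkey
        have hch : Real.cosh x ^ 2 - Real.sinh x ^ 2 = 1 := by
          have := Real.cosh_sq_sub_sinh_sq x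
          linarith [this]
        have hspos : 0 < Real.sinh x := Real.sinh_pos_iff.2 hx0
        have hcpos : 0 < Real.cosh x := Real.cosh_pos x
        have hE : (2 * T * x * Real.sinh x + (1 + T * x ^ 2) * Real.cosh x) * (Real.cosh x * x) -
            (1 + T * x ^ 2) * Real.sinh x * (Real.sinh x * x + Real.cosh x)
            = (T * x ^ 2 - 1) * (Real.sinh x * Real.cosh x)
              + (x + T * x ^ 3) * (Real.cosh x ^ 2 - Real.sinh x ^ 2) := by ring
        rw [hE, hch, mul_one]
        have hT' : 0 ≤ T - 1 / 3 := by linarith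
        have haux : 0 ≤ (T - 1 / 3) * (x ^ 2 * (Real.sinh x * Real.cosh x) + x ^ 3) := by
          have : 0 ≤ x ^ 2 * (Real.sinh x * Real.cosh x) + x ^ 3 := by positivity
          exact mul_nonneg hT' this
        nlinarith [hkey, haux]
      · positivity
  intro a ha b hb hab
  dsimp only
  rw [feq a, feq b]
  have hga : 0 ≤ g a := by
    have ha0 : (0:ℝ) < a := ha
    have := Real.sinh_pos_iff.2 ha0
    have := Real.cosh_pos a
    have h1 : (0:ℝ) < 1 + T * a ^ 2 := by nlinarith
    positivity
  exact Real.sqrt_lt_sqrt hga (hgmono ha hb hab)
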